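/- If C is an even-distance binary (n, M, 4) code (all pairwise distances even, minimum distance 4) with n = 2^m - 3 for some m ≥ 3, then M ≤ 2^{n-1}/(n+3). -/

import Mathlib

open Finset

/-- The character `ZMod 2 → ℤ`. -/
def chi (x : ZMod 2) : ℤ := if x = 0 then 1 else -1

lemma chi_add : ∀ a b : ZMod 2, chi (a + b) = chi a * chi b := by decide

lemma chi_zero : chi 0 = 1 := rfl

lemma chi_one : chi 1 = -1 := rfl

lemma chi_mul_self : ∀ a : ZMod 2, chi a * chi a = 1 := by decide

/-- Inner product on `Fin n → ZMod 2`. -/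
def inr {n : ℕ} (S c : Fin n → ZMod 2) : ZMod 2 := ∑ i, S i * c i

lemma inr_add_right {n : ℕ} (S v w : Fin n → ZMod 2) :
    inr S (v + w) = inr S v + inr S w := by
  simp [inr, mul_add, Finset.sum_add_distrib]

lemma chi_inr_add {n : ℕ} (S v w : Fin n → ZMod 2) :
    chi (inr S (v + w)) = chi (inr S v) * chi (inr S w) := by
  rw [inr_add_right, chi_add]

lemma inr_zero_right {n : ℕ} (S : Fin n → ZMod 2) : inr S 0 = 0 := by simp [inr]

lemma zmod2_add_eq_zero : ∀ a b : ZMod 2, a + b = 0 ↔ a = b := by decide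

lemma addV_eq_zero {n : ℕ} (x y : Fin n → ZMod 2) : x + y = 0 ↔ x = y := by
  constructor
  · intro h
    funext i
    have := congrFun h i
    exact (zmod2_add_eq_zero (x i) (y i)).1 this
  · intro h
    subst h
    funext i
    exact (zmod2_add_eq_zero (x i) (x i)).2 rfl

lemma addV_self {n : ℕ} (x : Fin n → ZMod 2) : x + x = 0 :=
  (addV_eq_zero x x).2 rfl

/-- Orthogonality of characters. -/
lemma sum_chi {n : ℕ} (v : Fin n → ZMod 2) :
    ∑ S : Fin n → ZMod 2, chi (inr S v) = if v = 0 then (2 ^ n : ℤ) else 0 := by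
  by_cases hv : v = 0
  · subst hv
    simp only [if_pos rfl]
    have : ∀ S : Fin n → ZMod 2, chi (inr S 0) = 1 := by
      intro S; rw [inr_zero_right, chi_zero]
    rw [Finset.sum_congr rfl (fun S _ => this S), Finset.sum_const, Finset.card_univ]
    simp [Fintype.card_fun]
  · rw [if_neg hv]
    obtain ⟨j, hj⟩ : ∃ j, v j ≠ 0 := by
      by_contra h
      push_neg at h
      exact hv (funext h)
    have hvj : v j = 1 := by
      revert hj; generalize v j = a; revert a; decide
    set e : Fin n → ZMod 2 := Pi.single j 1 with he
    have key : ∀ S : Fin n → ZMod 2, chi (inr (S + e) v) = - chi (inr S v) := by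
      intro S
      have h1 : inr (S + e) v = inr S v + inr e v := by
        simp [inr, add_mul, Finset.sum_add_distrib]
      have h2 : inr e v = 1 := by
        have : ∀ i, e i * v i = if i = j then v j else 0 := by
          intro i
          by_cases hij : i = j <;> simp [he, Pi.single_apply, hij]
        rw [inr, Finset.sum_congr rfl (fun i _ => this i), Finset.sum_ite_eq' univ j,
          if_pos (mem_univ j), hvj]
      rw [h1, h2, chi_add, chi_one]
      ring
    have hbij : ∑ S : Fin n → ZMod 2, chi (inr S v)
        = ∑ S : Fin n → ZMod 2, chi (inr (S + e) v) :=
      (Fintype.sum_equiv (Equiv.addRight e) _ _ (fun S => rfl)).symm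
    have hneg : ∑ S : Fin n → ZMod 2, chi (inr (S + e) v)
        = - ∑ S : Fin n → ZMod 2, chi (inr S v) := by
      rw [Finset.sum_congr rfl (fun S _ => key S)]
      simp
    linarith [hbij, hneg]

/-- Master counting lemma. -/
lemma master {n : ℕ} {α β : Type*} [DecidableEq α] [DecidableEq β]
    (A : Finset α) (B : Finset β) (f : α → Fin n → ZMod 2) (g : β → Fin n → ZMod 2) :
    ∑ S : Fin n → ZMod 2, (∑ a ∈ A, chi (inr S (f a))) * (∑ b ∈ B, chi (inr S (g b)))
      = 2 ^ n * (((A ×ˢ B).filter fun p => f p.1 = g p.2).card : ℤ) := by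
  have h1 : ∀ S : Fin n → ZMod 2,
      (∑ a ∈ A, chi (inr S (f a))) * (∑ b ∈ B, chi (inr S (g b)))
        = ∑ p ∈ A ×ˢ B, chi (inr S (f p.1 + g p.2)) := by
    intro S
    rw [Finset.sum_mul_sum, Finset.sum_product]
    exact Finset.sum_congr rfl fun a _ => Finset.sum_congr rfl fun b _ =>
      (chi_inr_add S (f a) (g b)).symm
  rw [Finset.sum_congr rfl (fun S _ => h1 S), Finset.sum_comm]
  have h2 : ∀ p ∈ A ×ˢ B, ∑ S : Fin n → ZMod 2, chi (inr S (f p.1 + g p.2))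
      = if f p.1 = g p.2 then (2 ^ n : ℤ) else 0 := by
    intro p _
    rw [sum_chi]
    congr 1
    simp [addV_eq_zero]
  rw [Finset.sum_congr rfl h2, Finset.sum_ite, Finset.sum_const, Finset.sum_const_zero]
  simp [mul_comm]

lemma chi_natCast : ∀ s : ℕ, chi (s : ZMod 2) = (-1) ^ s := by
  intro s
  induction s with
  | zero => simp [chi_zero]
  | succ k ih =>
    push_cast
    rw [chi_add, ih, chi_one, pow_succ]

/-- The key sign inequality. -/
lemma keyineq (m s : ℕ) (hm : 3 ≤ m) (u P : ℤ)
    (hu : u = (2 ^ m : ℤ) - 3 - 2 * s) (hP : P = (-1) ^ s) :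
    0 ≤ (u + 3 * P) * (u - P) := by
  have h4 : (2 : ℤ) ^ m = 4 * 2 ^ (m - 2) := by
    conv_lhs => rw [show m = (m - 2) + 2 by omega]
    rw [pow_add]
    ring
  rcases Nat.even_or_odd s with hs | hs
  · obtain ⟨k, hk⟩ := hs
    have hP1 : P = 1 := by rw [hP, hk]; rw [show k + k = 2 * k by ring, pow_mul]; norm_num
    rw [hP1]
    rcases le_or_gt 1 u with h | h
    · exact mul_nonneg (by linarith) (by linarith)
    rcases le_or_gt u (-3) with h' | h'
    · exact mul_nonneg_of_nonpos_of_nonpos (by linarith) (by linarith)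
    · exfalso
      have hs' : (s : ℤ) = k + k := by exact_mod_cast congrArg Nat.cast hk
      omega
  · obtain ⟨k, hk⟩ := hs
    have hP1 : P = -1 := by
      rw [hP, hk, pow_add, pow_mul]
      norm_num
    rw [hP1]
    rcases le_or_gt 3 u with h | h
    · exact mul_nonneg (by linarith) (by linarith)
    rcases le_or_gt u (-1) with h' | h'
    · exact mul_nonneg_of_nonpos_of_nonpos (by linarith) (by linarith)
    · exfalso
      have hs' : (s : ℤ) = 2 * k + 1 := by exact_mod_cast congrArg Nat.cast hk
      omega

def sgl {n : ℕ} (i : Fin n) : Fin n → ZMod 2 := Pi.single i 1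

def allOne {n : ℕ} : Fin n → ZMod 2 := fun _ => 1

def Tfun {n : ℕ} (C : Finset (Fin n → ZMod 2)) (S : Fin n → ZMod 2) : ℤ :=
  ∑ c ∈ C, chi (inr S c)

def Lfun {n : ℕ} (S : Fin n → ZMod 2) : ℤ := ∑ i, chi (inr S (sgl i))

def Pfun {n : ℕ} (S : Fin n → ZMod 2) : ℤ := chi (inr S allOne)

lemma inr_zero_left {n : ℕ} (c : Fin n → ZMod 2) : inr 0 c = 0 := by simp [inr]

lemma inr_sgl {n : ℕ} (S : Fin n → ZMod 2) (i : Fin n) : inr S (sgl i) = S i := by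
  have h : ∀ k, S k * sgl i k = if k = i then S k else 0 := by
    intro k
    by_cases hk : k = i <;> simp [sgl, Pi.single_apply, hk]
  rw [inr, Finset.sum_congr rfl (fun k _ => h k), Finset.sum_ite_eq' univ i,
    if_pos (mem_univ i)]

lemma inr_allOne {n : ℕ} (S : Fin n → ZMod 2) : inr S allOne = ∑ i, S i := by
  simp [inr, allOne]

lemma inr_allOne_left {n : ℕ} (v : Fin n → ZMod 2) : inr allOne v = ∑ i, v i := by
  simp [inr, allOne]

lemma sgl_inj {n : ℕ} {i j : Fin n} (h : sgl i = sgl j) : i = j := by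
  by_contra hij
  have := congrFun h i
  simp [sgl, Pi.single_apply, hij] at this

lemma hammingDist_eq_sum {n : ℕ} (c c' : Fin n → ZMod 2) :
    hammingDist c c' = (univ.filter fun k => (c + c') k = 1).card := by
  have hpt : ∀ a b : ZMod 2, (a ≠ b) ↔ (a + b = 1) := by decide
  simp only [hammingDist, Pi.add_apply]
  exact congrArg Finset.card (Finset.filter_congr fun k _ => hpt (c k) (c' k))

lemma sgl_pair_card {n : ℕ} (i j : Fin n) :
    (univ.filter fun k => (sgl i + sgl j) k = 1).card ≤ 2 := by
  have hsub : (univ.filter fun k => (sgl i + sgl j) k = 1) ⊆ {i, j} := by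
    intro k hk
    simp only [mem_filter, Pi.add_apply] at hk
    by_contra hk2
    simp only [mem_insert, mem_singleton] at hk2
    push_neg at hk2
    have h1 : sgl i k = 0 := by simp [sgl, Pi.single_apply, hk2.1]
    have h2 : sgl j k = 0 := by simp [sgl, Pi.single_apply, hk2.2]
    rw [h1, h2] at hk
    exact one_ne_zero hk.2.symm
  calc (univ.filter fun k => (sgl i + sgl j) k = 1).card
      ≤ ({i, j} : Finset (Fin n)).card := Finset.card_le_card hsub
    _ ≤ 2 := by
        apply le_trans (Finset.card_insert_le _ _)
        simp

theorem stmt5 (m : ℕ) (hm : 3 ≤ m) (n : ℕ) (hn : n = 2 ^ m - 3)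
    (C : Finset (Fin n → ZMod 2))
    (hdist : ∀ c ∈ C, ∀ c' ∈ C, c ≠ c' → 4 ≤ hammingDist c c')
    (heven : ∀ c ∈ C, ∀ c' ∈ C, Even (hammingDist c c')) :
    C.card ≤ 2 ^ (n - 1) / (n + 3) := by
  classical
  have h2m : 8 ≤ 2 ^ m := by
    calc (8 : ℕ) = 2 ^ 3 := by norm_num
      _ ≤ 2 ^ m := Nat.pow_le_pow_right (by norm_num) hm
  have h2m' : 2 ^ m = 2 * 2 ^ (m - 1) := by
    conv_lhs => rw [show m = (m - 1) + 1 by omega]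
    rw [pow_succ]; ring
  have hn5 : 5 ≤ n := by omega
  have hncast : (n : ℤ) = 2 ^ m - 3 := by
    rw [hn, Nat.cast_sub (by omega : 3 ≤ 2 ^ m)]
    push_cast
    ring
  set M : ℤ := (C.card : ℤ) with hM
  set T : (Fin n → ZMod 2) → ℤ := Tfun C with hT
  set L : (Fin n → ZMod 2) → ℤ := Lfun with hLdef
  set P : (Fin n → ZMod 2) → ℤ := Pfun with hPdef
  set A : Finset (Fin n × (Fin n → ZMod 2)) := (univ : Finset (Fin n)) ×ˢ C with hA
  -- close pairs are equal
  have hclose : ∀ c ∈ C, ∀ c' ∈ C, hammingDist c c' ≤ 2 → c = c' := by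
    intro c hc c' hc' h
    by_contra hne
    have := hdist c hc c' hc' hne
    omega
  -- pair cancellation
  have hpairkey : ∀ (i j : Fin n), ∀ c ∈ C, ∀ c' ∈ C,
      c + c' = sgl i + sgl j → c = c' ∧ i = j := by
    intro i j c hc c' hc' h
    have hcc' : c = c' := by
      apply hclose c hc c' hc'
      rw [hammingDist_eq_sum, h]
      exact sgl_pair_card i j
    refine ⟨hcc', ?_⟩
    have h0 : sgl i + sgl j = 0 := by
      rw [← h, hcc']
      exact addV_self c'
    exact sgl_inj ((addV_eq_zero _ _).1 h0)
  -- L S * T S as a single sum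
  have hLT : ∀ S : Fin n → ZMod 2,
      L S * T S = ∑ p ∈ A, chi (inr S (sgl p.1 + p.2)) := by
    intro S
    rw [hLdef, hT, Lfun, Tfun, Finset.sum_mul_sum, hA, Finset.sum_product]
    exact Finset.sum_congr rfl fun i _ => Finset.sum_congr rfl fun c _ =>
      (chi_inr_add S (sgl i) c).symm
  have hPLT : ∀ S : Fin n → ZMod 2,
      P S * (L S * T S) = ∑ p ∈ A, chi (inr S (allOne + (sgl p.1 + p.2))) := by
    intro S
    rw [hLT S, Finset.mul_sum]
    exact Finset.sum_congr rfl fun p _ => by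
      rw [hPdef, Pfun, ← chi_inr_add]
  -- first moment: sum of (L T)^2
  have hM1 : ∑ S : Fin n → ZMod 2, (L S * T S) * (L S * T S)
      = 2 ^ n * ((n : ℤ) * M) := by
    have hms := master A A (fun p => sgl p.1 + p.2) (fun p => sgl p.1 + p.2)
    have hstep : ∑ S : Fin n → ZMod 2, (L S * T S) * (L S * T S)
        = 2 ^ n * (((A ×ˢ A).filter fun q =>
            sgl q.1.1 + q.1.2 = sgl q.2.1 + q.2.2).card : ℤ) := by
      rw [← hms]
      exact Finset.sum_congr rfl fun S _ => by rw [hLT S]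
    have hcard : ((A ×ˢ A).filter fun q =>
        sgl q.1.1 + q.1.2 = sgl q.2.1 + q.2.2) = A.diag := by
      rw [Finset.diag_eq_filter]
      apply Finset.filter_congr
      intro q hq
      rw [Finset.mem_product] at hq
      have hq1 : q.1.2 ∈ C := by
        have := hq.1
        rw [hA, Finset.mem_product] at this
        exact this.2
      have hq2 : q.2.2 ∈ C := by
        have := hq.2
        rw [hA, Finset.mem_product] at this
        exact this.2
      constructor
      · intro h
        have hsum : q.1.2 + q.2.2 = sgl q.1.1 + sgl q.2.1 := by
          have h1 : (sgl q.1.1 + q.1.2) + (sgl q.2.1 + q.2.2)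
              = (sgl q.2.1 + q.2.2) + (sgl q.2.1 + q.2.2) := by rw [h]
          rw [addV_self] at h1
          have h2 : (sgl q.1.1 + q.1.2) + (sgl q.2.1 + q.2.2)
              = (q.1.2 + q.2.2) + (sgl q.1.1 + sgl q.2.1) := by abel
          rw [h2] at h1
          exact (addV_eq_zero _ _).1 h1
        obtain ⟨hc, hi⟩ := hpairkey q.1.1 q.2.1 q.1.2 hq1 q.2.2 hq2 hsum
        exact Prod.ext hi hc
      · intro h
        rw [h]
    rw [hstep, hcard, Finset.diag_card, hA, Finset.card_product, Finset.card_univ,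
      Fintype.card_fin]
    push_cast
    ring
  -- second moment: with allOne shift
  set Qf : Finset ((Fin n × (Fin n → ZMod 2)) × (Fin n → ZMod 2)) :=
    (A ×ˢ C).filter (fun q => allOne + (sgl q.1.1 + q.1.2) = q.2) with hQf
  have hM2 : ∑ S : Fin n → ZMod 2, (P S * (L S * T S)) * T S
      = 2 ^ n * (Qf.card : ℤ) := by
    have hms := master A C (fun p => allOne + (sgl p.1 + p.2)) (fun c => c)
    rw [← hms]
    apply Finset.sum_congr rfl
    intro S _
    rw [hPLT S, hT, Tfun]
  have hQle : Qf.card ≤ C.card := by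
    apply Finset.card_le_card_of_injOn (fun q => q.1.2)
    · intro q hq
      rw [Finset.mem_coe, hQf, Finset.mem_filter, Finset.mem_product] at hq
      have := hq.1.1
      rw [hA, Finset.mem_product] at this
      exact this.2
    · intro q hq q' hq' hsame
      simp only [Finset.mem_coe, hQf, Finset.mem_filter] at hq hq'
      rw [Finset.mem_product] at hq hq'
      have hqC : q.1.2 ∈ C := by
        have := hq.1.1; rw [hA, Finset.mem_product] at this; exact this.2
      have hd : q.2 ∈ C := hq.1.2
      have hd' : q'.2 ∈ C := hq'.1.2
      have heq1 : allOne + (sgl q.1.1 + q.1.2) = q.2 := hq.2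
      have heq2 : allOne + (sgl q'.1.1 + q'.1.2) = q'.2 := hq'.2
      have hsame' : q.1.2 = q'.1.2 := hsame
      rw [← hsame'] at heq2
      have hsum : q.2 + q'.2 = sgl q.1.1 + sgl q'.1.1 := by
        have h1 : (allOne + (sgl q.1.1 + q.1.2)) + (allOne + (sgl q'.1.1 + q.1.2))
            = q.2 + q'.2 := by rw [heq1, heq2]
        have h2 : (allOne + (sgl q.1.1 + q.1.2)) + (allOne + (sgl q'.1.1 + q.1.2))
            = (allOne + allOne) + ((q.1.2 + q.1.2) + (sgl q.1.1 + sgl q'.1.1)) := by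
          abel
        rw [addV_self, addV_self, zero_add, zero_add] at h2
        rw [← h1, h2]
      obtain ⟨hc, hi⟩ := hpairkey q.1.1 q'.1.1 q.2 hd q'.2 hd' hsum
      have : q.1 = q'.1 := Prod.ext hi hsame'
      exact Prod.ext this hc
  -- zeroth moment
  have hM3 : ∑ S : Fin n → ZMod 2, T S * T S = 2 ^ n * M := by
    have hms := master C C (fun c => c) (fun c => c)
    have hstep : ∑ S : Fin n → ZMod 2, T S * T S
        = 2 ^ n * (((C ×ˢ C).filter fun p => p.1 = p.2).card : ℤ) := by
      rw [← hms]
      exact Finset.sum_congr rfl fun S _ => by rw [hT, Tfun]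
    rw [hstep, ← Finset.diag_eq_filter, Finset.diag_card]
  -- pointwise expansion
  have hexp : ∀ S : Fin n → ZMod 2,
      (L S + 3 * P S) * (L S - P S) * (T S * T S)
        = (L S * T S) * (L S * T S) + 2 * ((P S * (L S * T S)) * T S)
          - 3 * (T S * T S) := by
    intro S
    have h : P S * P S = 1 := by rw [hPdef, Pfun]; exact chi_mul_self _
    linear_combination (-3 : ℤ) * (T S * T S) * h
  -- total sum evaluation
  have hUeq : ∑ S : Fin n → ZMod 2, (L S + 3 * P S) * (L S - P S) * (T S * T S)
      = 2 ^ n * ((n : ℤ) * M) + 2 * (2 ^ n * (Qf.card : ℤ)) - 3 * (2 ^ n * M) := by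
    rw [Finset.sum_congr rfl fun S _ => hexp S]
    rw [Finset.sum_sub_distrib, Finset.sum_add_distrib, ← Finset.mul_sum,
      ← Finset.mul_sum, hM1, hM2, hM3]
  -- nonnegativity of each term
  have hnonneg : ∀ S : Fin n → ZMod 2,
      0 ≤ (L S + 3 * P S) * (L S - P S) * (T S * T S) := by
    intro S
    apply mul_nonneg _ (mul_self_nonneg (T S))
    set s : ℕ := (univ.filter fun i => S i = 1).card with hs
    have hLs : L S = (n : ℤ) - 2 * s := by
      have hchi : ∀ a : ZMod 2, chi a = if a = 1 then (-1 : ℤ) else 1 := by decide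
      rw [hLdef, Lfun]
      rw [Finset.sum_congr rfl fun i _ => by rw [inr_sgl, hchi]]
      rw [Finset.sum_ite, Finset.sum_const, Finset.sum_const]
      have hsplit := Finset.card_filter_add_card_filter_not
        (s := (univ : Finset (Fin n))) (p := fun i => S i = 1)
      rw [Finset.card_univ, Fintype.card_fin] at hsplit
      have h1 : ((univ.filter fun i => S i = 1).card : ℤ)
          + ((univ.filter fun i => ¬ S i = 1).card : ℤ) = n := by exact_mod_cast hsplit
      simp only [smul_eq_mul, mul_one, mul_neg, nsmul_eq_mul]
      rw [← hs] at h1 ⊢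
      linarith
    have hPs : P S = (-1 : ℤ) ^ s := by
      have hid : ∀ a : ZMod 2, a = if a = 1 then 1 else 0 := by decide
      rw [hPdef, Pfun, inr_allOne]
      rw [Finset.sum_congr rfl fun i _ => hid (S i)]
      rw [Finset.sum_boole, ← hs, chi_natCast]
    exact keyineq m s hm (L S) (P S) (by rw [hLs, hncast]) hPs
  -- values at S = 0
  have hL0 : L 0 = (n : ℤ) := by
    rw [hLdef, Lfun]
    rw [Finset.sum_congr rfl fun i _ => by rw [inr_zero_left, chi_zero]]
    simp
  have hP0 : P 0 = 1 := by
    rw [hPdef, Pfun, inr_zero_left, chi_zero]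
  have hT0 : T 0 = M := by
    rw [hT, Tfun]
    rw [Finset.sum_congr rfl fun c _ => by rw [inr_zero_left, chi_zero]]
    simp [hM]
  -- values at S = allOne
  have hnodd : n % 2 = 1 := by omega
  have hnz2 : ((n : ℕ) : ZMod 2) = 1 := by
    conv_lhs => rw [show n = 2 * (n / 2) + 1 by omega]
    push_cast
    have h2 : (2 : ZMod 2) = 0 := rfl
    rw [h2]
    ring
  have hLA : L allOne = -(n : ℤ) := by
    have hstep : ∀ i : Fin n, inr allOne (sgl i) = 1 := by
      intro i
      have h : ∀ k, allOne k * sgl i k = if k = i then 1 else 0 := by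
        intro k
        by_cases hk : k = i <;> simp [allOne, sgl, Pi.single_apply, hk]
      rw [inr, Finset.sum_congr rfl fun k _ => h k, Finset.sum_ite_eq' univ i,
        if_pos (mem_univ i)]
    rw [hLdef, Lfun]
    rw [Finset.sum_congr rfl fun i _ => by rw [hstep i, chi_one]]
    simp
  have hPA : P allOne = -1 := by
    rw [hPdef, Pfun, inr_allOne]
    have : (∑ _i : Fin n, (1 : ZMod 2)) = ((n : ℕ) : ZMod 2) := by
      rw [Finset.sum_const, Finset.card_univ, Fintype.card_fin, nsmul_eq_mul, mul_one]
    rw [show allOne = (fun _ : Fin n => (1 : ZMod 2)) from rfl]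
    rw [this, hnz2, chi_one]
  have hTA : T allOne * T allOne = M * M := by
    have hpar : ∀ c ∈ C, ∀ c' ∈ C,
        chi (inr allOne c) * chi (inr allOne c') = 1 := by
      intro c hc c' hc'
      rw [← chi_inr_add]
      have h0 : inr allOne (c + c') = 0 := by
        rw [inr_allOne_left]
        have hid : ∀ a : ZMod 2, a = if a = 1 then 1 else 0 := by decide
        rw [Finset.sum_congr rfl fun i _ => hid ((c + c') i), Finset.sum_boole]
        rw [← hammingDist_eq_sum]
        obtain ⟨t, ht⟩ := heven c hc c' hc'
        rw [ht]
        push_cast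
        have haa : ∀ a : ZMod 2, a + a = 0 := by decide
        exact haa t
      rw [h0, chi_zero]
    rw [hT, Tfun, Finset.sum_mul_sum]
    rw [Finset.sum_congr rfl fun c hc =>
      Finset.sum_congr rfl fun c' hc' => hpar c hc c' hc']
    simp [hM, mul_comm]
  -- lower bound for the big sum
  have h0A : (0 : Fin n → ZMod 2) ≠ allOne := by
    intro h
    have := congrFun h ⟨0, by omega⟩
    simp [allOne] at this
  have hlow : ((n : ℤ) + 3) * ((n : ℤ) - 1) * (M * M)
        + ((n : ℤ) + 3) * ((n : ℤ) - 1) * (M * M)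
      ≤ ∑ S : Fin n → ZMod 2, (L S + 3 * P S) * (L S - P S) * (T S * T S) := by
    have hpair : ∑ S ∈ ({0, allOne} : Finset (Fin n → ZMod 2)),
        (L S + 3 * P S) * (L S - P S) * (T S * T S)
        = ((n : ℤ) + 3) * ((n : ℤ) - 1) * (M * M)
          + ((n : ℤ) + 3) * ((n : ℤ) - 1) * (M * M) := by
      rw [Finset.sum_pair h0A]
      rw [hL0, hP0, hT0, hLA, hPA, hTA]
      ring
    rw [← hpair]
    exact Finset.sum_le_sum_of_subset_of_nonneg (Finset.subset_univ _)
      (fun S _ _ => hnonneg S)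
  -- combine
  have hQleZ : (Qf.card : ℤ) ≤ M := by rw [hM]; exact_mod_cast hQle
  have hMnn : 0 ≤ M := Int.natCast_nonneg _
  have hbig : 2 * ((n : ℤ) + 3) * ((n : ℤ) - 1) * (M * M)
      ≤ 2 ^ n * ((n : ℤ) - 1) * M := by
    have h1 : 2 * ((n : ℤ) + 3) * ((n : ℤ) - 1) * (M * M)
        ≤ 2 ^ n * ((n : ℤ) * M) + 2 * (2 ^ n * (Qf.card : ℤ)) - 3 * (2 ^ n * M) := by
      rw [← hUeq]
      calc 2 * ((n : ℤ) + 3) * ((n : ℤ) - 1) * (M * M)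
          = ((n : ℤ) + 3) * ((n : ℤ) - 1) * (M * M)
            + ((n : ℤ) + 3) * ((n : ℤ) - 1) * (M * M) := by ring
        _ ≤ _ := hlow
    have hQM : 2 ^ n * ((Qf.card : ℤ)) ≤ 2 ^ n * M :=
      mul_le_mul_of_nonneg_left hQleZ (by positivity)
    linarith [h1, hQM]
  -- finish
  rw [Nat.le_div_iff_mul_le (by omega : 0 < n + 3)]
  by_cases hC0 : C.card = 0
  · rw [hC0]
    simp
  have hM1' : (1 : ℤ) ≤ M := by
    rw [hM]
    exact_mod_cast Nat.one_le_iff_ne_zero.2 hC0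
  have h2n : (2 : ℤ) ^ n = 2 * 2 ^ (n - 1) := by
    conv_lhs => rw [show n = (n - 1) + 1 by omega]
    rw [pow_succ]
    ring
  have hfin : M * ((n : ℤ) + 3) ≤ 2 ^ (n - 1) := by
    have hpos : (0 : ℤ) < 2 * ((n : ℤ) - 1) * M := by
      have hx1 : (0 : ℤ) < (n : ℤ) - 1 := by
        have : (5 : ℤ) ≤ (n : ℤ) := by exact_mod_cast hn5
        linarith
      have hx2 : (0 : ℤ) < M := by linarith
      exact mul_pos (mul_pos (by norm_num) hx1) hx2
    have e1 : (2 * ((n : ℤ) - 1) * M) * (M * ((n : ℤ) + 3))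
        = 2 * ((n : ℤ) + 3) * ((n : ℤ) - 1) * (M * M) := by ring
    have e2 : (2 * ((n : ℤ) - 1) * M) * ((2 : ℤ) ^ (n - 1))
        = 2 ^ n * ((n : ℤ) - 1) * M := by rw [h2n]; ring
    have hfactor : (2 * ((n : ℤ) - 1) * M) * (M * ((n : ℤ) + 3))
        ≤ (2 * ((n : ℤ) - 1) * M) * ((2 : ℤ) ^ (n - 1)) := by
      rw [e1, e2]
      exact hbig
    exact le_of_mul_le_mul_left hfactor hpos
  have : (C.card : ℤ) * ((n : ℤ) + 3) ≤ 2 ^ (n - 1) := by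
    rw [← hM]
    exact hfin
  exact_mod_cast this
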